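/- arXiv:1002.4258 — 3 statements merged into one kernel-verified Lean document; each statement's English description precedes it below -/
import Mathlib

section
/- If A is a band-dominated operator on l²(Γ), then every sequence h : ℕ → Γ tending to infinity possesses a subsequence g such that the limit operator A_g exists, i.e., R_{g(m)}⁻¹ A R_{g(m)} and R_{g(m)}⁻¹ A* R_{g(m)} converge strongly as m → ∞. -/
open Filter Topology

/-- The generators of the algebra of band operators: operators of multiplication
by a bounded function and left translations `(L_t u)(x) = u(t⁻¹ x)`. -/
def ShiftAndMultOps (Γ : Type*) [Group Γ] [Countable Γ] :
    Set (lp (fun _ : Γ => ℂ) 2 →L[ℂ] lp (fun _ : Γ => ℂ) 2) :=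
  {T | (∃ a : Γ → ℂ, (∃ C, ∀ x, ‖a x‖ ≤ C) ∧
          ∀ (u : lp (fun _ : Γ => ℂ) 2) (x : Γ), T u x = a x * u x) ∨
       (∃ t : Γ, ∀ (u : lp (fun _ : Γ => ℂ) 2) (x : Γ), T u x = u (t⁻¹ * x))}

/-- The band-dominated operators: the norm closure of the algebra generated by
multiplication operators and left translations. -/
def BandDominatedOps (Γ : Type*) [Group Γ] [Countable Γ] :
    Set (lp (fun _ : Γ => ℂ) 2 →L[ℂ] lp (fun _ : Γ => ℂ) 2) :=
  closure (Algebra.adjoin ℂ (ShiftAndMultOps Γ) :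
    Set (lp (fun _ : Γ => ℂ) 2 →L[ℂ] lp (fun _ : Γ => ℂ) 2))

/-- A sequence `h : ℕ → Γ` tends to infinity if it eventually leaves every
finite subset of `Γ`. -/
def TendsToInfinityGrp {Γ : Type*} (h : ℕ → Γ) : Prop :=
  ∀ Γ₀ : Finset Γ, ∀ᶠ n in atTop, h n ∉ Γ₀

/-- `B` is the limit operator of `A` with respect to `h`:
`R_{h(m)}⁻¹ A R_{h(m)} → B` and `R_{h(m)}⁻¹ A* R_{h(m)} → B*` strongly. -/
def IsLimitOperator {Γ : Type*} [Group Γ] [Countable Γ]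
    (R : Γ → (lp (fun _ : Γ => ℂ) 2 →L[ℂ] lp (fun _ : Γ => ℂ) 2))
    (A : lp (fun _ : Γ => ℂ) 2 →L[ℂ] lp (fun _ : Γ => ℂ) 2)
    (h : ℕ → Γ)
    (B : lp (fun _ : Γ => ℂ) 2 →L[ℂ] lp (fun _ : Γ => ℂ) 2) : Prop :=
  (∀ u, Tendsto (fun m => ((R ((h m)⁻¹)).comp (A.comp (R (h m)))) u) atTop (𝓝 (B u))) ∧
  (∀ u, Tendsto (fun m =>
      ((R ((h m)⁻¹)).comp ((ContinuousLinearMap.adjoint A).comp (R (h m)))) u)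
    atTop (𝓝 (ContinuousLinearMap.adjoint B u)))

/- ## Auxiliary material for the proof -/

open scoped ENNReal NNReal
set_option linter.unusedSectionVars false
set_option maxHeartbeats 1000000
set_option synthInstance.maxHeartbeats 1000000

noncomputable section

namespace LimOpProof

abbrev Hsp (Γ : Type*) : Type _ := lp (fun _ : Γ => ℂ) 2

abbrev Opr (Γ : Type*) : Type _ := Hsp Γ →L[ℂ] Hsp Γ

variable {Γ : Type*} [Group Γ] [Countable Γ]

/-- conjugation by the right translation -/
def CR (R : Γ → Opr Γ) (g : Γ) (A : Opr Γ) : Opr Γ := (R g⁻¹).comp (A.comp (R g))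

/-- strong convergence of the conjugated operators -/
def Conv (R : Γ → Opr Γ) (A : Opr Γ) (g : ℕ → Γ) (B : Opr Γ) : Prop :=
  ∀ u, Tendsto (fun m => ((R ((g m)⁻¹)).comp (A.comp (R (g m)))) u) atTop (𝓝 (B u))

theorem isLim_iff (R : Γ → Opr Γ) (A : Opr Γ) (h : ℕ → Γ) (B : Opr Γ) :
    IsLimitOperator R A h B ↔
      (Conv R A h B ∧ Conv R (ContinuousLinearMap.adjoint A) h
        (ContinuousLinearMap.adjoint B)) := Iff.rfl

theorem conv_iff_CR (R : Γ → Opr Γ) (A : Opr Γ) (g : ℕ → Γ) (B : Opr Γ) :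
    Conv R A g B ↔ ∀ u, Tendsto (fun m => CR R (g m) A u) atTop (𝓝 (B u)) := Iff.rfl

variable {R : Γ → Opr Γ}

section basic
variable (hR : ∀ (r : Γ) (u : Hsp Γ) (x : Γ), R r u x = u (x * r))
include hR

theorem R_comp (r s : Γ) : (R r).comp (R s) = R (r * s) := by
  ext u x
  simp [hR, mul_assoc]

theorem R_one : R 1 = ContinuousLinearMap.id ℂ (Hsp Γ) := by
  ext u x
  simp [hR]

theorem norm_R_apply (r : Γ) (u : Hsp Γ) : ‖R r u‖ = ‖u‖ := by
  have hp : 0 < (2 : ℝ≥0∞).toReal := by norm_num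
  rw [lp.norm_eq_tsum_rpow hp, lp.norm_eq_tsum_rpow hp]
  congr 1
  simp only [hR]
  exact (Equiv.mulRight r).tsum_eq fun y => ‖u y‖ ^ (2 : ℝ≥0∞).toReal

theorem adjoint_R (r : Γ) : ContinuousLinearMap.adjoint (R r) = R r⁻¹ := by
  symm
  rw [ContinuousLinearMap.eq_adjoint_iff]
  intro u v
  rw [lp.inner_eq_tsum, lp.inner_eq_tsum, ← (Equiv.mulRight r).tsum_eq]
  refine tsum_congr fun y => ?_
  simp [hR, mul_assoc]

theorem norm_CR_apply_le (g : Γ) (A : Opr Γ) (u : Hsp Γ) :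
    ‖CR R g A u‖ ≤ ‖A‖ * ‖u‖ := by
  have : CR R g A u = R g⁻¹ (A (R g u)) := rfl
  rw [this, norm_R_apply hR]
  calc ‖A (R g u)‖ ≤ ‖A‖ * ‖R g u‖ := A.le_opNorm _
    _ = ‖A‖ * ‖u‖ := by rw [norm_R_apply hR]

theorem CR_one (g : Γ) : CR R g 1 = 1 := by
  have : CR R g 1 = (R g⁻¹).comp (R g) := rfl
  rw [this, R_comp hR, inv_mul_cancel, R_one hR]
  rfl

theorem CR_mul (g : Γ) (A B : Opr Γ) : CR R g (A * B) = CR R g A * CR R g B := by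
  have h1 : (R g).comp (R g⁻¹) = ContinuousLinearMap.id ℂ (Hsp Γ) := by
    rw [R_comp hR, mul_inv_cancel, R_one hR]
  have h2 : ∀ v : Hsp Γ, R g (R g⁻¹ v) = v := fun v => by
    have := congrArg (fun T : Opr Γ => T v) h1
    simpa using this
  ext u x
  show (R g⁻¹ (A (B (R g u)))) x = (R g⁻¹ (A (R g (R g⁻¹ (B (R g u)))))) x
  rw [h2]

theorem CR_add (g : Γ) (A B : Opr Γ) : CR R g (A + B) = CR R g A + CR R g B := by
  simp [CR, ContinuousLinearMap.comp_add, ContinuousLinearMap.add_comp]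

theorem CR_sub (g : Γ) (A B : Opr Γ) : CR R g (A - B) = CR R g A - CR R g B := by
  simp [CR, ContinuousLinearMap.comp_sub, ContinuousLinearMap.sub_comp]

theorem CR_smul (g : Γ) (c : ℂ) (A : Opr Γ) : CR R g (c • A) = c • CR R g A := by
  simp [CR, ContinuousLinearMap.comp_smul, ContinuousLinearMap.smul_comp]

theorem CR_adjoint (g : Γ) (A : Opr Γ) :
    ContinuousLinearMap.adjoint (CR R g A) = CR R g (ContinuousLinearMap.adjoint A) := by
  unfold CR
  rw [ContinuousLinearMap.adjoint_comp, ContinuousLinearMap.adjoint_comp,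
    adjoint_R hR, adjoint_R hR, inv_inv, ContinuousLinearMap.comp_assoc]

/- ## Conv lemmas -/

theorem conv_norm_le {A B : Opr Γ} {g : ℕ → Γ} (hc : Conv R A g B) (u : Hsp Γ) :
    ‖B u‖ ≤ ‖A‖ * ‖u‖ :=
  le_of_tendsto (hc u).norm (Eventually.of_forall fun m => norm_CR_apply_le hR _ _ _)

theorem conv_sub {A A' B B' : Opr Γ} {g : ℕ → Γ}
    (h1 : Conv R A g B) (h2 : Conv R A' g B') : Conv R (A - A') g (B - B') := by
  intro u
  have h1' : Tendsto (fun m => CR R (g m) A u) atTop (𝓝 (B u)) := h1 u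
  have h2' : Tendsto (fun m => CR R (g m) A' u) atTop (𝓝 (B' u)) := h2 u
  have key := h1'.sub h2'
  show Tendsto (fun m => CR R (g m) (A - A') u) atTop (𝓝 ((B - B') u))
  have heq : (fun m => CR R (g m) A u - CR R (g m) A' u)
      = fun m => CR R (g m) (A - A') u :=
    funext fun m => by rw [CR_sub hR, ContinuousLinearMap.sub_apply]
  rw [← heq, ContinuousLinearMap.sub_apply]
  exact key

theorem conv_add {A A' B B' : Opr Γ} {g : ℕ → Γ}
    (h1 : Conv R A g B) (h2 : Conv R A' g B') : Conv R (A + A') g (B + B') := by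
  intro u
  have h1' : Tendsto (fun m => CR R (g m) A u) atTop (𝓝 (B u)) := h1 u
  have h2' : Tendsto (fun m => CR R (g m) A' u) atTop (𝓝 (B' u)) := h2 u
  have key := h1'.add h2'
  show Tendsto (fun m => CR R (g m) (A + A') u) atTop (𝓝 ((B + B') u))
  have heq : (fun m => CR R (g m) A u + CR R (g m) A' u)
      = fun m => CR R (g m) (A + A') u :=
    funext fun m => by rw [CR_add hR, ContinuousLinearMap.add_apply]
  rw [← heq, ContinuousLinearMap.add_apply]
  exact key

theorem conv_mul {A A' B B' : Opr Γ} {g : ℕ → Γ}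
    (h1 : Conv R A g B) (h2 : Conv R A' g B') : Conv R (A * A') g (B * B') := by
  intro u
  show Tendsto (fun m => CR R (g m) (A * A') u) atTop (𝓝 ((B * B') u))
  have heq : ∀ m, CR R (g m) (A * A') u = CR R (g m) A (CR R (g m) A' u) := by
    intro m
    rw [CR_mul hR]
    rfl
  rw [tendsto_iff_norm_sub_tendsto_zero]
  have h2' : Tendsto (fun m => CR R (g m) A' u) atTop (𝓝 (B' u)) := h2 u
  have h1' : Tendsto (fun m => CR R (g m) A (B' u)) atTop (𝓝 (B (B' u))) := h1 (B' u)
  have hb1 : Tendsto (fun m => ‖A‖ * ‖CR R (g m) A' u - B' u‖) atTop (𝓝 0) := by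
    have h0 := tendsto_sub_nhds_zero_iff.2 h2'
    have h3 := h0.norm.const_mul ‖A‖
    rw [norm_zero, mul_zero] at h3
    exact h3
  have hb2 : Tendsto (fun m => ‖CR R (g m) A (B' u) - B (B' u)‖) atTop (𝓝 0) := by
    have h0 := (tendsto_sub_nhds_zero_iff.2 h1').norm
    rwa [norm_zero] at h0
  have hsum := hb1.add hb2
  rw [add_zero] at hsum
  refine squeeze_zero (fun m => norm_nonneg _) (fun m => ?_) hsum
  rw [heq]
  have hmulBB : (B * B') u = B (B' u) := rfl
  rw [hmulBB]
  have hsplit : CR R (g m) A (CR R (g m) A' u) - B (B' u)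
      = (CR R (g m) A (CR R (g m) A' u) - CR R (g m) A (B' u))
        + (CR R (g m) A (B' u) - B (B' u)) := by abel
  rw [hsplit]
  refine (norm_add_le _ _).trans (add_le_add_left ?_ _)
  rw [← map_sub]
  exact norm_CR_apply_le hR _ _ _

theorem conv_subseq {A B : Opr Γ} {g : ℕ → Γ} (hc : Conv R A g B)
    {φ : ℕ → ℕ} (hφ : StrictMono φ) : Conv R A (g ∘ φ) B :=
  fun u => (hc u).comp hφ.tendsto_atTop

end basic

theorem memℓp_mul {b : Γ → ℂ} {C : ℝ} (hC : 0 ≤ C) (hb : ∀ x, ‖b x‖ ≤ C) (u : Hsp Γ) :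
    Memℓp (fun x => b x * u x) 2 := by
  have hp : 0 < (2 : ℝ≥0∞).toReal := by norm_num
  apply memℓp_gen
  refine Summable.of_nonneg_of_le (fun x => by positivity)
    (fun x => ?_) (((lp.memℓp u).summable hp).mul_left (C ^ (2:ℝ≥0∞).toReal))
  rw [norm_mul, Real.mul_rpow (norm_nonneg _) (norm_nonneg _)]
  exact mul_le_mul_of_nonneg_right
    (Real.rpow_le_rpow (norm_nonneg _) (hb x) hp.le)
    (Real.rpow_nonneg (norm_nonneg _) _)

/-- the multiplication operator by a bounded symbol -/
noncomputable def mulOp (b : Γ → ℂ) (C : ℝ) (hC : 0 ≤ C) (hb : ∀ x, ‖b x‖ ≤ C) :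
    Hsp Γ →L[ℂ] Hsp Γ :=
  LinearMap.mkContinuous
    { toFun := fun u => (⟨fun x => b x * u x, memℓp_mul hC hb u⟩ : Hsp Γ)
      map_add' := by
        intro u v; apply lp.ext; funext x
        simp [mul_add]
        rfl
      map_smul' := by
        intro c u; apply lp.ext; funext x
        simp [lp.coeFn_smul]
        ring }
    C
    (by
      intro u
      have hp : 0 < (2 : ℝ≥0∞).toReal := by norm_num
      simp only [LinearMap.coe_mk, AddHom.coe_mk]
      rcases le_or_gt ‖(⟨fun x => b x * u x, memℓp_mul hC hb u⟩ : Hsp Γ)‖ 0 with h | h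
      · exact h.trans (by positivity)
      rw [← Real.rpow_le_rpow_iff h.le (by positivity) hp, lp.norm_rpow_eq_tsum hp,
        Real.mul_rpow hC (norm_nonneg _), lp.norm_rpow_eq_tsum hp, ← tsum_mul_left]
      refine Summable.tsum_le_tsum (fun x => ?_) ((lp.memℓp _).summable hp)
        (((lp.memℓp u).summable hp).mul_left _)
      have : ‖(⟨fun x => b x * u x, memℓp_mul hC hb u⟩ : Hsp Γ) x‖ = ‖b x * u x‖ := rfl
      rw [this, norm_mul, Real.mul_rpow (norm_nonneg _) (norm_nonneg _)]
      exact mul_le_mul_of_nonneg_right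
        (Real.rpow_le_rpow (norm_nonneg _) (hb x) hp.le)
        (Real.rpow_nonneg (norm_nonneg _) _))

theorem mulOp_apply (b : Γ → ℂ) (C : ℝ) (hC : 0 ≤ C) (hb : ∀ x, ‖b x‖ ≤ C)
    (u : Hsp Γ) (x : Γ) : mulOp b C hC hb u x = b x * u x := rfl

theorem mulOp_adjoint (b : Γ → ℂ) (C : ℝ) (hC : 0 ≤ C) (hb : ∀ x, ‖b x‖ ≤ C)
    (hb' : ∀ x, ‖star (b x)‖ ≤ C) :
    ContinuousLinearMap.adjoint (mulOp b C hC hb) = mulOp (star b) C hC hb' := by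
  symm
  rw [ContinuousLinearMap.eq_adjoint_iff]
  intro u v
  rw [lp.inner_eq_tsum, lp.inner_eq_tsum]
  refine tsum_congr fun x => ?_
  simp only [mulOp_apply, RCLike.inner_apply, Pi.star_apply, map_mul, starRingEnd_apply,
    star_star]
  ring


theorem norm_sq_eq (u : Hsp Γ) : ‖u‖ ^ (2:ℕ) = ∑' x, ‖u x‖ ^ (2:ℕ) := by
  have hp : 0 < (2 : ℝ≥0∞).toReal := by norm_num
  have := lp.norm_rpow_eq_tsum hp u
  have h2 : (2 : ℝ≥0∞).toReal = ((2:ℕ) : ℝ) := by norm_num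
  rw [h2] at this
  simpa [Real.rpow_natCast] using this

theorem mulOp_tendsto {a : ℕ → Γ → ℂ} {b : Γ → ℂ} {C : ℝ} (hC : 0 ≤ C)
    (ha : ∀ m x, ‖a m x‖ ≤ C) (hb : ∀ x, ‖b x‖ ≤ C)
    (hlim : ∀ x, Tendsto (fun m => a m x) atTop (𝓝 (b x))) (u : Hsp Γ) :
    Tendsto (fun m => mulOp (a m) C hC (ha m) u) atTop (𝓝 (mulOp b C hC hb u)) := by
  rw [tendsto_iff_norm_sub_tendsto_zero]
  have key : Tendsto
      (fun m => ∑' x, ‖(mulOp (a m) C hC (ha m) u - mulOp b C hC hb u) x‖ ^ (2:ℕ))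
      atTop (𝓝 0) := by
    have h0 : (0:ℝ) = ∑' x : Γ, (0:ℝ) := by simp
    rw [h0]
    refine tendsto_tsum_of_dominated_convergence
      (f := fun m x => ‖(mulOp (a m) C hC (ha m) u - mulOp b C hC hb u) x‖ ^ (2:ℕ))
      (bound := fun x => (2*C) ^ (2:ℕ) * ‖u x‖ ^ (2:ℕ)) ?_ ?_ ?_
    · have hp : 0 < (2 : ℝ≥0∞).toReal := by norm_num
      have := ((lp.memℓp u).summable hp).mul_left ((2*C) ^ (2:ℕ))
      have h2 : (2 : ℝ≥0∞).toReal = ((2:ℕ) : ℝ) := by norm_num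
      rw [h2] at this
      simpa [Real.rpow_natCast] using this
    · intro x
      have hval : ∀ m, (mulOp (a m) C hC (ha m) u - mulOp b C hC hb u) x
          = (a m x - b x) * u x := by
        intro m
        rw [lp.coeFn_sub, Pi.sub_apply, mulOp_apply, mulOp_apply, sub_mul]
      simp only [hval]
      have : Tendsto (fun m => ‖(a m x - b x) * u x‖ ^ (2:ℕ)) atTop
          (𝓝 (‖((b x) - b x) * u x‖ ^ (2:ℕ))) := by
        exact ((((hlim x).sub tendsto_const_nhds).mul tendsto_const_nhds).norm).pow 2
      simpa using this
    · refine Eventually.of_forall fun m => fun x => ?_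
      have hval : (mulOp (a m) C hC (ha m) u - mulOp b C hC hb u) x
          = (a m x - b x) * u x := by
        rw [lp.coeFn_sub, Pi.sub_apply, mulOp_apply, mulOp_apply, sub_mul]
      show ‖‖(mulOp (a m) C hC (ha m) u - mulOp b C hC hb u) x‖ ^ (2:ℕ)‖
        ≤ (2*C) ^ (2:ℕ) * ‖u x‖ ^ (2:ℕ)
      rw [hval, Real.norm_of_nonneg (by positivity), norm_mul, mul_pow]
      have h1 : ‖a m x - b x‖ ≤ 2 * C := by
        calc ‖a m x - b x‖ ≤ ‖a m x‖ + ‖b x‖ := norm_sub_le _ _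
          _ ≤ 2 * C := by have := ha m x; have := hb x; linarith
      exact mul_le_mul_of_nonneg_right
        (pow_le_pow_left₀ (norm_nonneg _) h1 2) (by positivity)
  have sq : ∀ m, ‖mulOp (a m) C hC (ha m) u - mulOp b C hC hb u‖
      = Real.sqrt (∑' x, ‖(mulOp (a m) C hC (ha m) u - mulOp b C hC hb u) x‖ ^ (2:ℕ)) := by
    intro m
    rw [← norm_sq_eq, Real.sqrt_sq (norm_nonneg _)]
  simp only [sq]
  have : Tendsto Real.sqrt (𝓝 0) (𝓝 0) := by
    simpa using (Real.continuous_sqrt.tendsto 0)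
  exact this.comp key

/-- diagonal / compactness extraction of a pointwise convergent subsequence
of a bounded sequence of symbols -/
theorem exists_subseq_pointwise {C : ℝ} (a : ℕ → Γ → ℂ) (ha : ∀ m x, ‖a m x‖ ≤ C) :
    ∃ φ : ℕ → ℕ, StrictMono φ ∧ ∃ b : Γ → ℂ, (∀ x, ‖b x‖ ≤ C) ∧
      ∀ x, Tendsto (fun m => a (φ m) x) atTop (𝓝 (b x)) := by
  have hcpt : IsCompact (Set.pi Set.univ fun _ : Γ => Metric.closedBall (0:ℂ) C) :=
    isCompact_univ_pi fun _ => isCompact_closedBall 0 C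
  have hmem : ∀ m, a m ∈ Set.pi Set.univ fun _ : Γ => Metric.closedBall (0:ℂ) C := by
    intro m
    rw [Set.mem_univ_pi]
    intro x
    rw [mem_closedBall_zero_iff]
    exact ha m x
  obtain ⟨b, hbmem, φ, hφ, hconv⟩ := hcpt.tendsto_subseq hmem
  refine ⟨φ, hφ, b, fun x => ?_, fun x => ?_⟩
  · have := hbmem x (Set.mem_univ x)
    rwa [mem_closedBall_zero_iff] at this
  · exact (tendsto_pi_nhds.1 hconv) x



/- ## transfer of convergence through generalized subsequences -/

theorem tendsto_comp_of_eventually {X : Type*} [TopologicalSpace X] {c : ℕ → X} {L : X}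
    {F' d : ℕ → ℕ} (hc : Tendsto (fun j => c (F' j)) atTop (𝓝 L))
    (hd : ∀ᶠ k in atTop, ∃ j, k ≤ j ∧ d k = F' j) :
    Tendsto (fun k => c (d k)) atTop (𝓝 L) := by
  rw [tendsto_atTop'] at hc ⊢
  intro s hs
  obtain ⟨N, hN⟩ := hc s hs
  obtain ⟨N₀, hN₀⟩ := eventually_atTop.1 hd
  refine ⟨max N N₀, fun k hk => ?_⟩
  obtain ⟨j, hjk, hdk⟩ := hN₀ k (le_trans (le_max_right _ _) hk)
  rw [hdk]
  exact hN j (le_trans (le_trans (le_max_left _ _) hk) hjk)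

theorem conv_transfer {A B : Opr Γ} {h : ℕ → Γ} {F' d : ℕ → ℕ}
    (hc : Conv R A (h ∘ F') B) (hd : ∀ᶠ k in atTop, ∃ j, k ≤ j ∧ d k = F' j) :
    Conv R A (h ∘ d) B := fun u =>
  tendsto_comp_of_eventually
    (c := fun m => ((R ((h m)⁻¹)).comp (A.comp (R (h m)))) u) (hc u) hd

section main
variable (hR : ∀ (r : Γ) (u : Hsp Γ) (x : Γ), R r u x = u (x * r))
include hR

/- ## constant conjugation -/

theorem isLim_of_CR_const {A : Opr Γ} (hconst : ∀ g : Γ, CR R g A = A) (h : ℕ → Γ) :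
    IsLimitOperator R A h A := by
  constructor
  · intro u
    show Tendsto (fun m => CR R (h m) A u) atTop (𝓝 (A u))
    have : (fun m => CR R (h m) A u) = fun _ => A u := funext fun m => by rw [hconst]
    rw [this]
    exact tendsto_const_nhds
  · intro u
    show Tendsto (fun m => CR R (h m) (ContinuousLinearMap.adjoint A) u) atTop
      (𝓝 (ContinuousLinearMap.adjoint A u))
    have hconst' : ∀ g : Γ, CR R g (ContinuousLinearMap.adjoint A)
        = ContinuousLinearMap.adjoint A := fun g => by
      rw [← CR_adjoint hR, hconst]
    have : (fun m => CR R (h m) (ContinuousLinearMap.adjoint A) u)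
        = fun _ => ContinuousLinearMap.adjoint A u := funext fun m => by rw [hconst']
    rw [this]
    exact tendsto_const_nhds

theorem CR_shift {A : Opr Γ} {t : Γ} (hT : ∀ (u : Hsp Γ) (x : Γ), A u x = u (t⁻¹ * x))
    (g : Γ) : CR R g A = A := by
  ext u x
  show (R g⁻¹ (A (R g u))) x = A u x
  rw [hR, hT, hT, hR]
  congr 1
  group

theorem CR_algebraMap (c : ℂ) (g : Γ) :
    CR R g (algebraMap ℂ (Opr Γ) c) = algebraMap ℂ (Opr Γ) c := by
  rw [Algebra.algebraMap_eq_smul_one, CR_smul hR, CR_one hR]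

/- ## the multiplication generator -/

theorem CR_mulOp (a : Γ → ℂ) (C : ℝ) (hC : 0 ≤ C) (ha : ∀ x, ‖a x‖ ≤ C) (g : Γ)
    (ha' : ∀ x, ‖a (x * g⁻¹)‖ ≤ C) :
    CR R g (mulOp a C hC ha) = mulOp (fun x => a (x * g⁻¹)) C hC ha' := by
  ext u x
  show (R g⁻¹ (mulOp a C hC ha (R g u))) x = (mulOp (fun x => a (x * g⁻¹)) C hC ha' u) x
  rw [hR, mulOp_apply, mulOp_apply, hR]
  have hx : x * g⁻¹ * g = x := by group
  rw [hx]

theorem mult_case {a : Γ → ℂ} {C : ℝ} (hC : 0 ≤ C) (ha : ∀ x, ‖a x‖ ≤ C)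
    {T : Opr Γ} (hT : ∀ (u : Hsp Γ) (x : Γ), T u x = a x * u x) (h : ℕ → Γ) :
    ∃ φ : ℕ → ℕ, StrictMono φ ∧ ∃ B, IsLimitOperator R T (h ∘ φ) B := by
  have hTeq : T = mulOp a C hC ha := by
    ext u x
    rw [hT]
    rfl
  have hstar : ∀ x, ‖star a x‖ ≤ C := fun x => by
    rw [Pi.star_apply, norm_star]; exact ha x
  set am : ℕ → Γ → ℂ := fun m x => a (x * (h m)⁻¹) with ham
  have hambd : ∀ m x, ‖am m x‖ ≤ C := fun m x => ha _
  obtain ⟨φ, hφ, b, hbbd, hconv⟩ := exists_subseq_pointwise am hambd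
  have hbstar : ∀ x, ‖star b x‖ ≤ C := fun x => by
    rw [Pi.star_apply, norm_star]; exact hbbd x
  refine ⟨φ, hφ, mulOp b C hC hbbd, ?_, ?_⟩
  · intro u
    show Tendsto (fun m => CR R (h (φ m)) T u) atTop (𝓝 (mulOp b C hC hbbd u))
    have hCReq : (fun m => CR R (h (φ m)) T u)
        = fun m => mulOp (fun x => am (φ m) x) C hC (hambd (φ m)) u := by
      funext m
      rw [hTeq, CR_mulOp hR a C hC ha (h (φ m)) (hambd (φ m))]
    rw [hCReq]
    exact mulOp_tendsto hC (fun m => hambd (φ m)) hbbd (fun x => hconv x) u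
  · intro u
    show Tendsto (fun m => CR R (h (φ m)) (ContinuousLinearMap.adjoint T) u) atTop
      (𝓝 (ContinuousLinearMap.adjoint (mulOp b C hC hbbd) u))
    have hadjB : ContinuousLinearMap.adjoint (mulOp b C hC hbbd)
        = mulOp (star b) C hC hbstar := mulOp_adjoint b C hC hbbd hbstar
    have hCReq : (fun m => CR R (h (φ m)) (ContinuousLinearMap.adjoint T) u)
        = fun m => mulOp (fun x => star (am (φ m) x)) C hC
            (fun x => by rw [norm_star]; exact hambd (φ m) x) u := by
      funext m
      rw [hTeq, mulOp_adjoint a C hC ha hstar,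
        CR_mulOp hR (star a) C hC hstar (h (φ m))
          (fun x => by rw [Pi.star_apply, norm_star]; exact ha _)]
      rfl
    rw [hCReq, hadjB]
    exact mulOp_tendsto hC _ hbstar
      (fun x => (continuous_star.tendsto (b x)).comp (hconv x)) u

/- ## closure under limits, addition, multiplication -/

theorem isLim_subseq {A B : Opr Γ} {g : ℕ → Γ} (hL : IsLimitOperator R A g B)
    {φ : ℕ → ℕ} (hφ : StrictMono φ) : IsLimitOperator R A (g ∘ φ) B :=
  ⟨conv_subseq hR hL.1 hφ, conv_subseq hR hL.2 hφ⟩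

theorem isLim_add {A A' B B' : Opr Γ} {g : ℕ → Γ} (h1 : IsLimitOperator R A g B)
    (h2 : IsLimitOperator R A' g B') : IsLimitOperator R (A + A') g (B + B') := by
  refine ⟨conv_add hR h1.1 h2.1, ?_⟩
  have := conv_add hR h1.2 h2.2
  rwa [← map_add, ← map_add] at this

theorem isLim_mul {A A' B B' : Opr Γ} {g : ℕ → Γ} (h1 : IsLimitOperator R A g B)
    (h2 : IsLimitOperator R A' g B') : IsLimitOperator R (A * A') g (B * B') := by
  refine ⟨conv_mul hR h1.1 h2.1, ?_⟩
  have := conv_mul hR h2.2 h1.2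
  have hadj : ∀ T S : Opr Γ, ContinuousLinearMap.adjoint T * ContinuousLinearMap.adjoint S
      = ContinuousLinearMap.adjoint (S * T) := fun T S =>
    (ContinuousLinearMap.adjoint_comp S T).symm
  rwa [hadj, hadj] at this

/- ## approximation lemma -/

theorem conv_of_approx {A : Opr Γ} {A' B' : ℕ → Opr Γ} {B : Opr Γ} {g : ℕ → Γ}
    (hA : ∀ n : ℕ, ‖A - A' n‖ ≤ 1 / ((n : ℝ) + 1))
    (hB : ∀ n : ℕ, ‖B' n - B‖ ≤ 2 / ((n : ℝ) + 1))
    (hc : ∀ n, Conv R (A' n) g (B' n)) : Conv R A g B := by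
  intro u
  rw [Metric.tendsto_atTop]
  intro ε hε
  have hu : (0 : ℝ) < ‖u‖ + 1 := by positivity
  obtain ⟨n, hn⟩ := exists_nat_one_div_lt (show (0:ℝ) < ε / (6 * (‖u‖ + 1)) by positivity)
  obtain ⟨N, hN⟩ := Metric.tendsto_atTop.1 (hc n u) (ε / 2) (by positivity)
  refine ⟨N, fun m hm => ?_⟩
  show dist (CR R (g m) A u) (B u) < ε
  have htri := dist_triangle4 (CR R (g m) A u) (CR R (g m) (A' n) u) (B' n u) (B u)
  have h1 : dist (CR R (g m) A u) (CR R (g m) (A' n) u) ≤ (1 / ((n:ℝ)+1)) * ‖u‖ := by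
    rw [dist_eq_norm]
    have : CR R (g m) A u - CR R (g m) (A' n) u = CR R (g m) (A - A' n) u := by
      rw [CR_sub hR, ContinuousLinearMap.sub_apply]
    rw [this]
    calc ‖CR R (g m) (A - A' n) u‖ ≤ ‖A - A' n‖ * ‖u‖ := norm_CR_apply_le hR _ _ _
      _ ≤ (1 / ((n:ℝ)+1)) * ‖u‖ := mul_le_mul_of_nonneg_right (hA n) (norm_nonneg _)
  have h2 : dist (CR R (g m) (A' n) u) (B' n u) < ε / 2 := hN m hm
  have h3 : dist (B' n u) (B u) ≤ (2 / ((n:ℝ)+1)) * ‖u‖ := by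
    rw [dist_eq_norm]
    have : B' n u - B u = (B' n - B) u := (ContinuousLinearMap.sub_apply _ _ _).symm
    rw [this]
    calc ‖(B' n - B) u‖ ≤ ‖B' n - B‖ * ‖u‖ := (B' n - B).le_opNorm u
      _ ≤ (2 / ((n:ℝ)+1)) * ‖u‖ := mul_le_mul_of_nonneg_right (hB n) (norm_nonneg _)
  have hnn : (0:ℝ) < (n:ℝ) + 1 := by positivity
  have hkey : (3 / ((n:ℝ)+1)) * ‖u‖ < ε / 2 := by
    have hnu : (0:ℝ) ≤ ‖u‖ := norm_nonneg _
    rw [div_lt_iff₀ (by positivity)] at hn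
    have hn2 : 6 * (‖u‖ + 1) < ε * ((n:ℝ)+1) := by
      have h6 : (0:ℝ) < 6 * (‖u‖ + 1) := by positivity
      calc 6 * (‖u‖ + 1) = (6 * (‖u‖ + 1)) * 1 := by ring
        _ < (6 * (‖u‖ + 1)) * (ε / (6 * (‖u‖ + 1)) * ((n:ℝ)+1)) := by
            exact (mul_lt_mul_iff_right₀ h6).2 hn
        _ = ε * ((n:ℝ)+1) := by field_simp
    rw [div_mul_eq_mul_div, div_lt_iff₀ hnn]
    nlinarith [hn2, hnu]
  calc dist (CR R (g m) A u) (B u)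
      ≤ (1 / ((n:ℝ)+1)) * ‖u‖ + ε / 2 + (2 / ((n:ℝ)+1)) * ‖u‖ := by
        refine htri.trans ?_
        gcongr
    _ = (3 / ((n:ℝ)+1)) * ‖u‖ + ε / 2 := by ring
    _ < ε / 2 + ε / 2 := by linarith
    _ = ε := by ring

/- ## the set of operators with limit operators along subsequences -/

def Slim (R : Γ → Opr Γ) : Set (Opr Γ) :=
  {A | ∀ h : ℕ → Γ, ∃ φ : ℕ → ℕ, StrictMono φ ∧ ∃ B, IsLimitOperator R A (h ∘ φ) B}

theorem S_limit {x : ℕ → Opr Γ} {A : Opr Γ} (hx : ∀ n, x n ∈ Slim R)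
    (hlim : Tendsto x atTop (𝓝 A)) : A ∈ Slim R := by
  intro h
  -- choose fast approximants
  have hex : ∀ n : ℕ, ∃ k, dist (x k) A < 1 / ((n:ℝ) + 1) := by
    intro n
    obtain ⟨N, hN⟩ := Metric.tendsto_atTop.1 hlim (1 / ((n:ℝ)+1)) (by positivity)
    exact ⟨N, hN N le_rfl⟩
  choose ν hν using hex
  set A' : ℕ → Opr Γ := fun n => x (ν n) with hA'
  have hA'S : ∀ n, A' n ∈ Slim R := fun n => hx (ν n)
  have hA'dist : ∀ n : ℕ, ‖A - A' n‖ ≤ 1 / ((n:ℝ) + 1) := by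
    intro n
    rw [← dist_eq_norm, dist_comm]
    exact (hν n).le
  -- recursive extraction of nested subsequences
  let ψ : ℕ → (ℕ → ℕ) → (ℕ → ℕ) := fun n f => (hA'S n (h ∘ f)).choose
  let F : ℕ → (ℕ → ℕ) := fun n => Nat.rec id (fun k fk => fk ∘ ψ k fk) n
  have hFsucc : ∀ n, F (n + 1) = F n ∘ ψ n (F n) := fun n => rfl
  have hψ : ∀ n (f : ℕ → ℕ), StrictMono (ψ n f) ∧
      ∃ B, IsLimitOperator R (A' n) ((h ∘ f) ∘ ψ n f) B :=
    fun n f => (hA'S n (h ∘ f)).choose_spec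
  have hFmono : ∀ n, StrictMono (F n) := by
    intro n
    induction n with
    | zero => exact strictMono_id
    | succ k IH => exact IH.comp (hψ k (F k)).1
  let B' : ℕ → Opr Γ := fun n => (hψ n (F n)).2.choose
  have hB' : ∀ n, IsLimitOperator R (A' n) (h ∘ F (n + 1)) (B' n) :=
    fun n => (hψ n (F n)).2.choose_spec
  -- the diagonal sequence
  let d : ℕ → ℕ := fun k => F (k + 1) k
  have hdmono : StrictMono d := by
    apply strictMono_nat_of_lt_succ
    intro k
    have h1 : d (k + 1) = F (k + 1) (ψ (k + 1) (F (k + 1)) (k + 1)) := rfl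
    have h2 : k + 1 ≤ ψ (k + 1) (F (k + 1)) (k + 1) := (hψ (k + 1) (F (k + 1))).1.le_apply
    calc d k = F (k + 1) k := rfl
      _ < F (k + 1) (k + 1) := hFmono (k + 1) (lt_add_one k)
      _ ≤ F (k + 1) (ψ (k + 1) (F (k + 1)) (k + 1)) := (hFmono (k + 1)).monotone h2
      _ = d (k + 1) := rfl
  have haux : ∀ (n t k : ℕ), ∃ j, k ≤ j ∧ F (n + t) k = F n j := by
    intro n t
    induction t with
    | zero => exact fun k => ⟨k, le_rfl, rfl⟩
    | succ t IH =>
      intro k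
      have h1 : F (n + (t + 1)) k = F (n + t) (ψ (n + t) (F (n + t)) k) := rfl
      obtain ⟨j, hj1, hj2⟩ := IH (ψ (n + t) (F (n + t)) k)
      exact ⟨j, le_trans (hψ (n + t) (F (n + t))).1.le_apply hj1, h1.trans hj2⟩
  have hdF : ∀ n, ∀ᶠ k in atTop, ∃ j, k ≤ j ∧ d k = F (n + 1) j := by
    intro n
    rw [eventually_atTop]
    refine ⟨n, fun k hk => ?_⟩
    have hkn : k + 1 = (n + 1) + (k - n) := by omega
    obtain ⟨j, hj1, hj2⟩ := haux (n + 1) (k - n) k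
    refine ⟨j, hj1, ?_⟩
    show F (k + 1) k = F (n + 1) j
    rw [hkn]
    exact hj2
  -- limit operators along the diagonal
  have hB'd : ∀ n, IsLimitOperator R (A' n) (h ∘ d) (B' n) := fun n =>
    ⟨conv_transfer (hB' n).1 (hdF n), conv_transfer (hB' n).2 (hdF n)⟩
  -- the B' are Cauchy
  have hBB : ∀ n m : ℕ, ‖B' n - B' m‖ ≤ ‖A' n - A' m‖ := by
    intro n m
    refine ContinuousLinearMap.opNorm_le_bound _ (norm_nonneg _) fun u => ?_
    exact conv_norm_le hR (conv_sub hR (hB'd n).1 (hB'd m).1) u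
  have hAA : ∀ n m : ℕ, ‖A' n - A' m‖ ≤ 1 / ((n:ℝ)+1) + 1 / ((m:ℝ)+1) := by
    intro n m
    calc ‖A' n - A' m‖ = dist (A' n) (A' m) := (dist_eq_norm _ _).symm
      _ ≤ dist (A' n) A + dist A (A' m) := dist_triangle _ _ _
      _ ≤ 1 / ((n:ℝ)+1) + 1 / ((m:ℝ)+1) := by
          rw [dist_comm A (A' m)]
          exact add_le_add (hν n).le (hν m).le
  have hmono : ∀ (N n : ℕ), N ≤ n → (1:ℝ) / ((n:ℝ)+1) ≤ 1 / ((N:ℝ)+1) := by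
    intro N n hNn
    apply one_div_le_one_div_of_le (by positivity)
    have : (N:ℝ) ≤ (n:ℝ) := Nat.cast_le.2 hNn
    linarith
  have hcauchy : CauchySeq B' := by
    refine cauchySeq_of_le_tendsto_0 (fun N => 2 / ((N:ℝ)+1)) (fun n m N hn hm => ?_) ?_
    · rw [dist_eq_norm]
      calc ‖B' n - B' m‖ ≤ ‖A' n - A' m‖ := hBB n m
        _ ≤ 1 / ((n:ℝ)+1) + 1 / ((m:ℝ)+1) := hAA n m
        _ ≤ 1 / ((N:ℝ)+1) + 1 / ((N:ℝ)+1) := add_le_add (hmono N n hn) (hmono N m hm)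
        _ = 2 / ((N:ℝ)+1) := by ring
    · have := tendsto_one_div_add_atTop_nhds_zero_nat.const_mul (2:ℝ)
      rw [mul_zero] at this
      convert this using 2 with n
      ring
  obtain ⟨B, hBlim⟩ := cauchySeq_tendsto_of_complete hcauchy
  have hBdist : ∀ n : ℕ, ‖B' n - B‖ ≤ 2 / ((n:ℝ)+1) := by
    intro n
    have htt : Tendsto (fun m => ‖B' n - B' m‖) atTop (𝓝 ‖B' n - B‖) :=
      (tendsto_const_nhds.sub hBlim).norm
    refine le_of_tendsto htt (eventually_atTop.2 ⟨n, fun m hm => ?_⟩)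
    calc ‖B' n - B' m‖ ≤ 1 / ((n:ℝ)+1) + 1 / ((m:ℝ)+1) := (hBB n m).trans (hAA n m)
      _ ≤ 1 / ((n:ℝ)+1) + 1 / ((n:ℝ)+1) := by
          exact add_le_add le_rfl (hmono n m hm)
      _ = 2 / ((n:ℝ)+1) := by ring
  -- conclusion
  refine ⟨d, hdmono, B, ?_, ?_⟩
  · exact conv_of_approx hR hA'dist hBdist (fun n => (hB'd n).1)
  · have adjA : ∀ n : ℕ, ‖ContinuousLinearMap.adjoint A
        - ContinuousLinearMap.adjoint (A' n)‖ ≤ 1 / ((n:ℝ)+1) := by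
      intro n
      rw [← map_sub]
      rw [LinearIsometryEquiv.norm_map]
      exact hA'dist n
    have adjB : ∀ n : ℕ, ‖ContinuousLinearMap.adjoint (B' n)
        - ContinuousLinearMap.adjoint B‖ ≤ 2 / ((n:ℝ)+1) := by
      intro n
      rw [← map_sub]
      rw [LinearIsometryEquiv.norm_map]
      exact hBdist n
    exact conv_of_approx hR adjA adjB (fun n => (hB'd n).2)

end main

end LimOpProof


end


/-- If `A` is a band-dominated operator on `l²(Γ)`, `Γ` a finitely
generated countable discrete group, then every sequence `h : ℕ → Γ` tending to
infinity has a subsequence `g = h ∘ φ` such that the limit operator `A_g`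
exists. -/
theorem band_dominated_has_limit_operator_along_subsequence
    {Γ : Type*} [Group Γ] [Countable Γ] [Group.FG Γ]
    (R : Γ → (lp (fun _ : Γ => ℂ) 2 →L[ℂ] lp (fun _ : Γ => ℂ) 2))
    (hR : ∀ (r : Γ) (u : lp (fun _ : Γ => ℂ) 2) (x : Γ), R r u x = u (x * r))
    (A : lp (fun _ : Γ => ℂ) 2 →L[ℂ] lp (fun _ : Γ => ℂ) 2)
    (hA : A ∈ BandDominatedOps Γ)
    (h : ℕ → Γ) (hh : TendsToInfinityGrp h) :
    ∃ φ : ℕ → ℕ, StrictMono φ ∧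
      ∃ B : lp (fun _ : Γ => ℂ) 2 →L[ℂ] lp (fun _ : Γ => ℂ) 2,
        IsLimitOperator R A (h ∘ φ) B := by
  classical
  have hgen : (Algebra.adjoin ℂ (ShiftAndMultOps Γ) : Set (LimOpProof.Opr Γ))
      ⊆ LimOpProof.Slim R := by
    intro T hT
    refine Algebra.adjoin_induction
      (fun T hT => ?_) (fun c => ?_)
      (fun a b _ _ iha ihb => ?_) (fun a b _ _ iha ihb => ?_) hT
    · rcases hT with ⟨a, ⟨C, hC⟩, hTa⟩ | ⟨t, hTt⟩
      · intro g
        exact LimOpProof.mult_case hR (le_max_right C 0)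
          (fun x => (hC x).trans (le_max_left C 0)) hTa g
      · intro g
        exact ⟨id, strictMono_id, T,
          LimOpProof.isLim_of_CR_const hR (fun r => LimOpProof.CR_shift hR hTt r) g⟩
    · intro g
      exact ⟨id, strictMono_id, _,
        LimOpProof.isLim_of_CR_const hR
          (fun r => LimOpProof.CR_algebraMap hR c r) g⟩
    · intro g
      obtain ⟨φ₁, hφ₁, B₁, hB₁⟩ := iha g
      obtain ⟨φ₂, hφ₂, B₂, hB₂⟩ := ihb (g ∘ φ₁)
      exact ⟨φ₁ ∘ φ₂, hφ₁.comp hφ₂, B₁ + B₂,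
        LimOpProof.isLim_add hR (LimOpProof.isLim_subseq hR hB₁ hφ₂) hB₂⟩
    · intro g
      obtain ⟨φ₁, hφ₁, B₁, hB₁⟩ := iha g
      obtain ⟨φ₂, hφ₂, B₂, hB₂⟩ := ihb (g ∘ φ₁)
      exact ⟨φ₁ ∘ φ₂, hφ₁.comp hφ₂, B₁ * B₂,
        LimOpProof.isLim_mul hR (LimOpProof.isLim_subseq hR hB₁ hφ₂) hB₂⟩
  have hS : A ∈ LimOpProof.Slim R := by
    obtain ⟨x, hx1, hx2⟩ := mem_closure_iff_seq_limit.1 hA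
    exact LimOpProof.S_limit hR (fun n => hgen (hx1 n)) hx2
  exact hS h
end

section
/- If (v_n) is an inflating sequence for 𝒴 = (Y_n), then for every bounded sequence (A_n) of operators A_n on im P_{Y_n}, the series Σ_{n≥1} R_{v_n} A_n R_{v_n}⁻¹ converges strongly on l²(Γ), and the resulting map Op : ℱ_𝒴 → L(l²(Γ)) is a continuous algebra homomorphism. -/
open Filter Topology

set_option maxHeartbeats 1000000
set_option synthInstance.maxHeartbeats 400000

private lemma orth_norm_sq_sum {F : Type*} [NormedAddCommGroup F] [InnerProductSpace ℂ F]
    {ι : Type*} (s : Finset ι) (f : ι → F)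
    (h : ∀ i ∈ s, ∀ j ∈ s, i ≠ j → (inner ℂ (f i) (f j) : ℂ) = 0) :
    ‖∑ i ∈ s, f i‖ ^ 2 = ∑ i ∈ s, ‖f i‖ ^ 2 := by
  have key : (inner ℂ (∑ i ∈ s, f i) (∑ j ∈ s, f j) : ℂ) = ∑ i ∈ s, ((‖f i‖ : ℂ)) ^ 2 := by
    rw [sum_inner]
    refine Finset.sum_congr rfl fun i hi => ?_
    rw [inner_sum, Finset.sum_eq_single_of_mem i hi]
    · exact inner_self_eq_norm_sq_to_K (f i)
    · intro j hj hne
      exact h i hi j hj (Ne.symm hne)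
  have key2 : RCLike.re (inner ℂ (∑ i ∈ s, f i) (∑ j ∈ s, f j) : ℂ)
      = RCLike.re (∑ i ∈ s, ((‖f i‖ : ℂ)) ^ 2) := by rw [key]
  rw [inner_self_eq_norm_sq] at key2
  rw [key2, map_sum]
  refine Finset.sum_congr rfl fun i _ => ?_
  simp [RCLike.re_to_complex, ← Complex.ofReal_pow]

private lemma summable_of_orth {F : Type*} [NormedAddCommGroup F] [InnerProductSpace ℂ F]
    [CompleteSpace F] {f : ℕ → F}
    (h : ∀ m n : ℕ, m ≠ n → (inner ℂ (f m) (f n) : ℂ) = 0)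
    (hs : Summable fun n => ‖f n‖ ^ 2) : Summable f := by
  rw [summable_iff_vanishing_norm]
  intro ε hε
  obtain ⟨s, hs'⟩ := summable_iff_vanishing_norm.1 hs (ε ^ 2) (by positivity)
  refine ⟨s, fun t ht => ?_⟩
  have h1 : ‖∑ i ∈ t, f i‖ ^ 2 = ∑ i ∈ t, ‖f i‖ ^ 2 :=
    orth_norm_sq_sum t f (fun i _ j _ hij => h i j hij)
  have h2 : ‖∑ i ∈ t, ‖f i‖ ^ 2‖ < ε ^ 2 := hs' t ht
  rw [Real.norm_eq_abs] at h2
  have h3 : ∑ i ∈ t, ‖f i‖ ^ 2 ≤ |∑ i ∈ t, ‖f i‖ ^ 2| := le_abs_self _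
  nlinarith [norm_nonneg (∑ i ∈ t, f i), hε]

private lemma lp_eval_hasSum {Γ : Type*} (x : Γ) {f : ℕ → lp (fun _ : Γ => ℂ) 2}
    {a : lp (fun _ : Γ => ℂ) 2} (hf : HasSum f a) : HasSum (fun n => f n x) (a x) := by
  have hb : ∀ w : lp (fun _ : Γ => ℂ) 2, ‖w x‖ ≤ 1 * ‖w‖ := by
    intro w
    rw [one_mul]
    exact lp.norm_apply_le_norm (by norm_num) w x
  let e : lp (fun _ : Γ => ℂ) 2 →L[ℂ] ℂ := LinearMap.mkContinuous
    { toFun := fun w => w x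
      map_add' := fun w₁ w₂ => by simp [lp.coeFn_add]
      map_smul' := fun c w => by simp [lp.coeFn_smul] } 1 hb
  exact hf.mapL e

/-- If `(v_n)` is an inflating sequence for `𝒴 = (Y_n)`, then for
every bounded sequence `(A_n)` of operators on `im P_{Y_n}` the series
`Σ_n R_{v_n} A_n R_{v_n}⁻¹` converges strongly on `l²(Γ)`, and the resulting map
`Op` is a continuous algebra homomorphism on `ℱ_𝒴`: it is bounded
(`‖Op(A)‖ ≤ sup ‖A_n‖`), additive and multiplicative. -/
theorem opMap_strong_convergence_and_homomorphism
    {Γ : Type*} [Group Γ] [Countable Γ]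
    (Y : ℕ → Finset Γ) (hmono : Monotone Y)
    (hcup : ⋃ n, (Y n : Set Γ) = Set.univ)
    (v : ℕ → Γ)
    (hinfl : ∀ m n, m ≠ n →
      Disjoint ((fun y => y * (v m)⁻¹) '' (Y m : Set Γ))
               ((fun y => y * (v n)⁻¹) '' (Y n : Set Γ)))
    (P : ℕ → (lp (fun _ : Γ => ℂ) 2 →L[ℂ] lp (fun _ : Γ => ℂ) 2))
    (hP : ∀ (n : ℕ) (u : lp (fun _ : Γ => ℂ) 2) (x : Γ),
      P n u x = ((Y n : Set Γ)).indicator (fun y => u y) x)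
    (R : Γ → (lp (fun _ : Γ => ℂ) 2 →L[ℂ] lp (fun _ : Γ => ℂ) 2))
    (hR : ∀ (r : Γ) (u : lp (fun _ : Γ => ℂ) 2) (x : Γ), R r u x = u (x * r))
    (A B : ℕ → (lp (fun _ : Γ => ℂ) 2 →L[ℂ] lp (fun _ : Γ => ℂ) 2))
    (hAcorner : ∀ n, A n = (P n).comp ((A n).comp (P n)))
    (hBcorner : ∀ n, B n = (P n).comp ((B n).comp (P n)))
    (CA CB : ℝ) (hCA : ∀ n, ‖A n‖ ≤ CA) (hCB : ∀ n, ‖B n‖ ≤ CB) :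
    ∃ TA TB TS TP : lp (fun _ : Γ => ℂ) 2 →L[ℂ] lp (fun _ : Γ => ℂ) 2,
      (∀ u, HasSum (fun n => ((R (v n)).comp ((A n).comp (R (v n)⁻¹))) u) (TA u)) ∧
      (∀ u, HasSum (fun n => ((R (v n)).comp ((B n).comp (R (v n)⁻¹))) u) (TB u)) ∧
      (∀ u, HasSum (fun n => ((R (v n)).comp (((A n + B n)).comp (R (v n)⁻¹))) u) (TS u)) ∧
      (∀ u, HasSum (fun n => ((R (v n)).comp (((A n).comp (B n)).comp (R (v n)⁻¹))) u) (TP u)) ∧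
      TS = TA + TB ∧ TP = TA.comp TB ∧ ‖TA‖ ≤ CA := by
  classical
  set S : ℕ → Set Γ := fun n => (fun y => y * (v n)⁻¹) '' (Y n : Set Γ) with hS
  have hSdisj : ∀ m n, m ≠ n → Disjoint (S m) (S n) := hinfl
  have hSmem : ∀ (n : ℕ) (x : Γ), x ∈ S n ↔ x * v n ∈ (Y n : Set Γ) := by
    intro n x
    constructor
    · rintro ⟨y, hy, rfl⟩
      simpa [inv_mul_cancel_right] using hy
    · intro h
      exact ⟨x * v n, h, by simp [mul_inv_cancel_right]⟩
  -- basic facts about R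
  have hRR : ∀ (r : Γ) (w : lp (fun _ : Γ => ℂ) 2), R r⁻¹ (R r w) = w := by
    intro r w
    apply lp.ext
    funext x
    rw [hR, hR, inv_mul_cancel_right]
  have hRnorm : ∀ (r : Γ) (w : lp (fun _ : Γ => ℂ) 2), ‖R r w‖ = ‖w‖ := by
    intro r w
    have h1 : (inner ℂ (R r w) (R r w) : ℂ) = inner ℂ w w := by
      rw [lp.inner_eq_tsum, lp.inner_eq_tsum]
      rw [← Equiv.tsum_eq (Equiv.mulRight r) (fun x => (inner ℂ (w x) (w x) : ℂ))]
      refine tsum_congr fun x => ?_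
      simp [hR]
    have h2 := inner_self_eq_norm_sq_to_K (𝕜 := ℂ) (R r w)
    have h3 := inner_self_eq_norm_sq_to_K (𝕜 := ℂ) w
    rw [h2, h3] at h1
    have h4 : (‖R r w‖ : ℝ) ^ 2 = ‖w‖ ^ 2 := by exact_mod_cast h1
    rw [← Real.sqrt_sq (norm_nonneg (R r w)), ← Real.sqrt_sq (norm_nonneg w), h4]
  -- P is idempotent
  have hPP : ∀ (n : ℕ) (w : lp (fun _ : Γ => ℂ) 2), P n (P n w) = P n w := by
    intro n w
    apply lp.ext
    funext y
    rw [hP, hP, Set.indicator_apply, Set.indicator_apply]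
    split_ifs with h
    · rw [hP, Set.indicator_of_mem h]
    · rfl
  -- the projection Q n = R (v n) ∘ P n ∘ R (v n)⁻¹, pointwise
  have hQ : ∀ (n : ℕ) (u : lp (fun _ : Γ => ℂ) 2) (x : Γ),
      (R (v n)) ((P n) ((R (v n)⁻¹) u)) x = if x ∈ S n then u x else 0 := by
    intro n u x
    rw [hR, hP, Set.indicator_apply]
    by_cases h : x ∈ S n
    · rw [if_pos ((hSmem n x).1 h), if_pos h, hR, mul_inv_cancel_right]
    · rw [if_neg (fun h' => h ((hSmem n x).2 h')), if_neg h]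
  -- support of the conjugated operator
  have hTsupp : ∀ (C : ℕ → (lp (fun _ : Γ => ℂ) 2 →L[ℂ] lp (fun _ : Γ => ℂ) 2)),
      (∀ n, C n = (P n).comp ((C n).comp (P n))) →
      ∀ (n : ℕ) (u : lp (fun _ : Γ => ℂ) 2) (x : Γ), x ∉ S n →
      ((R (v n)).comp ((C n).comp (R (v n)⁻¹))) u x = 0 := by
    intro C hC n u x hx
    simp only [ContinuousLinearMap.comp_apply]
    rw [hR]
    conv_lhs => rw [hC n]
    simp only [ContinuousLinearMap.comp_apply]
    rw [hP, Set.indicator_apply, if_neg]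
    exact fun h => hx ((hSmem n x).2 h)
  -- the conjugated operator kills functions vanishing on S n
  have hkill : ∀ (C : ℕ → (lp (fun _ : Γ => ℂ) 2 →L[ℂ] lp (fun _ : Γ => ℂ) 2)),
      (∀ n, C n = (P n).comp ((C n).comp (P n))) →
      ∀ (n : ℕ) (w : lp (fun _ : Γ => ℂ) 2), (∀ x ∈ S n, w x = 0) →
      ((R (v n)).comp ((C n).comp (R (v n)⁻¹))) w = 0 := by
    intro C hC n w hw
    have hPz : (P n) ((R (v n)⁻¹) w) = 0 := by
      apply lp.ext
      funext y
      rw [hP, Set.indicator_apply, lp.coeFn_zero]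
      split_ifs with h
      · rw [hR]
        exact hw (y * (v n)⁻¹) ⟨y, h, rfl⟩
      · rfl
    have hz : (C n) ((R (v n)⁻¹) w) = 0 := by
      conv_lhs => rw [hC n]
      simp only [ContinuousLinearMap.comp_apply, hPz, map_zero]
    simp only [ContinuousLinearMap.comp_apply, hz, map_zero]
  -- factorization through Q
  have hTQ : ∀ (C : ℕ → (lp (fun _ : Γ => ℂ) 2 →L[ℂ] lp (fun _ : Γ => ℂ) 2)),
      (∀ n, C n = (P n).comp ((C n).comp (P n))) →
      ∀ (n : ℕ) (u : lp (fun _ : Γ => ℂ) 2),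
      ((R (v n)).comp ((C n).comp (R (v n)⁻¹))) u
        = (R (v n)) ((C n) ((P n) ((R (v n)⁻¹) u))) := by
    intro C hC n u
    simp only [ContinuousLinearMap.comp_apply]
    congr 1
    conv_lhs => rw [hC n]
    conv_rhs => rw [hC n]
    simp only [ContinuousLinearMap.comp_apply]
    rw [hPP]
  -- norm bound through Q
  have hTbound : ∀ (C : ℕ → (lp (fun _ : Γ => ℂ) 2 →L[ℂ] lp (fun _ : Γ => ℂ) 2)),
      (∀ n, C n = (P n).comp ((C n).comp (P n))) →
      ∀ (Cc : ℝ), (∀ n, ‖C n‖ ≤ Cc) →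
      ∀ (n : ℕ) (u : lp (fun _ : Γ => ℂ) 2),
      ‖((R (v n)).comp ((C n).comp (R (v n)⁻¹))) u‖
        ≤ Cc * ‖(R (v n)) ((P n) ((R (v n)⁻¹) u))‖ := by
    intro C hC Cc hCc n u
    rw [hTQ C hC n u, hRnorm, hRnorm]
    calc ‖(C n) ((P n) ((R (v n)⁻¹) u))‖
        ≤ ‖C n‖ * ‖(P n) ((R (v n)⁻¹) u)‖ := (C n).le_opNorm _
      _ ≤ Cc * ‖(P n) ((R (v n)⁻¹) u)‖ :=
          mul_le_mul_of_nonneg_right (hCc n) (norm_nonneg _)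
  -- disjoint supports give orthogonality
  have hdisj_inner : ∀ (f g : lp (fun _ : Γ => ℂ) 2),
      (∀ x, f x = 0 ∨ g x = 0) → (inner ℂ f g : ℂ) = 0 := by
    intro f g h
    rw [lp.inner_eq_tsum]
    have hz : ∀ x, (inner ℂ (f x) (g x) : ℂ) = 0 := by
      intro x
      rcases h x with h | h <;> simp [h]
    exact (tsum_congr hz).trans tsum_zero
  -- Bessel-type inequality for the Q's
  have hBessel : ∀ (u : lp (fun _ : Γ => ℂ) 2) (s : Finset ℕ),
      ∑ n ∈ s, ‖(R (v n)) ((P n) ((R (v n)⁻¹) u))‖ ^ 2 ≤ ‖u‖ ^ 2 := by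
    intro u s
    set q : ℕ → lp (fun _ : Γ => ℂ) 2 := fun n => (R (v n)) ((P n) ((R (v n)⁻¹) u)) with hq
    have hQorth : ∀ m ∈ s, ∀ n ∈ s, m ≠ n → (inner ℂ (q m) (q n) : ℂ) = 0 := by
      intro m _ n _ hmn
      apply hdisj_inner
      intro x
      by_cases hx : x ∈ S m
      · right
        rw [hq]
        rw [hQ, if_neg (fun hx' => Set.disjoint_left.1 (hSdisj m n hmn) hx hx')]
      · left
        rw [hq, hQ, if_neg hx]
    have hsum : (inner ℂ (∑ n ∈ s, q n) u : ℂ) = ∑ n ∈ s, ((‖q n‖ : ℂ)) ^ 2 := by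
      rw [sum_inner]
      refine Finset.sum_congr rfl fun n _ => ?_
      have hinn : (inner ℂ (q n) u : ℂ) = inner ℂ (q n) (q n) := by
        rw [lp.inner_eq_tsum, lp.inner_eq_tsum]
        refine tsum_congr fun x => ?_
        by_cases hx : x ∈ S n
        · have : q n x = u x := by rw [hq, hQ, if_pos hx]
          rw [this]
        · have : q n x = 0 := by rw [hq, hQ, if_neg hx]
          simp [this]
      rw [hinn, inner_self_eq_norm_sq_to_K]
      norm_cast
    have hnorm : ‖∑ n ∈ s, q n‖ ^ 2 = ∑ n ∈ s, ‖q n‖ ^ 2 := orth_norm_sq_sum s q hQorth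
    have hre : (∑ n ∈ s, ‖q n‖ ^ 2 : ℝ) = Complex.re (inner ℂ (∑ n ∈ s, q n) u : ℂ) := by
      rw [hsum, Complex.re_sum]
      refine (Finset.sum_congr rfl fun n _ => ?_)
      norm_num [← Complex.ofReal_pow]
    have hcs : Complex.re (inner ℂ (∑ n ∈ s, q n) u : ℂ) ≤ ‖∑ n ∈ s, q n‖ * ‖u‖ :=
      re_inner_le_norm (𝕜 := ℂ) _ _
    rw [← hre] at hcs
    nlinarith [sq_nonneg (‖∑ n ∈ s, q n‖ - ‖u‖), hnorm,
      Finset.sum_nonneg (fun n (_ : n ∈ s) => sq_nonneg ‖q n‖)]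
  -- summability of the squares of the Q-norms
  have hQsummable : ∀ (u : lp (fun _ : Γ => ℂ) 2),
      Summable (fun n => ‖(R (v n)) ((P n) ((R (v n)⁻¹) u))‖ ^ 2) := by
    intro u
    exact summable_of_sum_le (fun n => sq_nonneg _) (fun s => hBessel u s)
  -- evaluation is a continuous linear functional
  have heval : ∀ (x : Γ) (f : ℕ → lp (fun _ : Γ => ℂ) 2) (a : lp (fun _ : Γ => ℂ) 2),
      HasSum f a → HasSum (fun n => f n x) (a x) := fun x f a hf => lp_eval_hasSum x hf
  -- the master construction
  have master : ∀ (C : ℕ → (lp (fun _ : Γ => ℂ) 2 →L[ℂ] lp (fun _ : Γ => ℂ) 2)),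
      (∀ n, C n = (P n).comp ((C n).comp (P n))) →
      ∀ (Cc : ℝ), (∀ n, ‖C n‖ ≤ Cc) →
      ∃ TC : lp (fun _ : Γ => ℂ) 2 →L[ℂ] lp (fun _ : Γ => ℂ) 2,
        (∀ u, HasSum (fun n => ((R (v n)).comp ((C n).comp (R (v n)⁻¹))) u) (TC u)) ∧
        ‖TC‖ ≤ Cc := by
    intro C hC Cc hCc
    have hCc0 : (0 : ℝ) ≤ Cc := le_trans (norm_nonneg _) (hCc 0)
    have horth : ∀ (u : lp (fun _ : Γ => ℂ) 2) (m n : ℕ), m ≠ n →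
        (inner ℂ (((R (v m)).comp ((C m).comp (R (v m)⁻¹))) u)
               (((R (v n)).comp ((C n).comp (R (v n)⁻¹))) u) : ℂ) = 0 := by
      intro u m n hmn
      apply hdisj_inner
      intro x
      by_cases hx : x ∈ S m
      · right
        exact hTsupp C hC n u x (fun hx' => Set.disjoint_left.1 (hSdisj m n hmn) hx hx')
      · left
        exact hTsupp C hC m u x hx
    have hsummable : ∀ u, Summable
        (fun n => ((R (v n)).comp ((C n).comp (R (v n)⁻¹))) u) := by
      intro u
      apply summable_of_orth (horth u)
      refine Summable.of_nonneg_of_le (fun n => sq_nonneg _) (fun n => ?_)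
        ((hQsummable u).mul_left (Cc ^ 2))
      have h1 := hTbound C hC Cc hCc n u
      have h2 := norm_nonneg (((R (v n)).comp ((C n).comp (R (v n)⁻¹))) u)
      nlinarith [mul_nonneg hCc0 (norm_nonneg ((R (v n)) ((P n) ((R (v n)⁻¹) u))))]
    have hpartial : ∀ (u : lp (fun _ : Γ => ℂ) 2) (s : Finset ℕ),
        ‖∑ n ∈ s, ((R (v n)).comp ((C n).comp (R (v n)⁻¹))) u‖ ≤ Cc * ‖u‖ := by
      intro u s
      have h1 : ‖∑ n ∈ s, ((R (v n)).comp ((C n).comp (R (v n)⁻¹))) u‖ ^ 2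
          = ∑ n ∈ s, ‖((R (v n)).comp ((C n).comp (R (v n)⁻¹))) u‖ ^ 2 :=
        orth_norm_sq_sum s _ (fun i _ j _ hij => horth u i j hij)
      have h2 : ∑ n ∈ s, ‖((R (v n)).comp ((C n).comp (R (v n)⁻¹))) u‖ ^ 2
          ≤ Cc ^ 2 * ‖u‖ ^ 2 := by
        calc ∑ n ∈ s, ‖((R (v n)).comp ((C n).comp (R (v n)⁻¹))) u‖ ^ 2
            ≤ ∑ n ∈ s, Cc ^ 2 * ‖(R (v n)) ((P n) ((R (v n)⁻¹) u))‖ ^ 2 := by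
              refine Finset.sum_le_sum fun n _ => ?_
              have h1 := hTbound C hC Cc hCc n u
              have h2 := norm_nonneg (((R (v n)).comp ((C n).comp (R (v n)⁻¹))) u)
              nlinarith [mul_nonneg hCc0 (norm_nonneg ((R (v n)) ((P n) ((R (v n)⁻¹) u))))]
          _ = Cc ^ 2 * ∑ n ∈ s, ‖(R (v n)) ((P n) ((R (v n)⁻¹) u))‖ ^ 2 := by
              rw [Finset.mul_sum]
          _ ≤ Cc ^ 2 * ‖u‖ ^ 2 :=
              mul_le_mul_of_nonneg_left (hBessel u s) (sq_nonneg Cc)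
      nlinarith [norm_nonneg (∑ n ∈ s, ((R (v n)).comp ((C n).comp (R (v n)⁻¹))) u),
        mul_nonneg hCc0 (norm_nonneg u)]
    let F : lp (fun _ : Γ => ℂ) 2 →ₗ[ℂ] lp (fun _ : Γ => ℂ) 2 :=
      { toFun := fun u => ∑' n, ((R (v n)).comp ((C n).comp (R (v n)⁻¹))) u
        map_add' := by
          intro u w
          rw [← Summable.tsum_add (hsummable u) (hsummable w)]
          exact tsum_congr fun n => map_add _ _ _
        map_smul' := by
          intro c u
          simp only [RingHom.id_apply]
          rw [← Summable.tsum_const_smul c (hsummable u)]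
          exact tsum_congr fun n => map_smul _ _ _ }
    have hFbound : ∀ u, ‖F u‖ ≤ Cc * ‖u‖ := by
      intro u
      have hts := (hsummable u).hasSum
      exact le_of_tendsto' hts.tendsto_sum_nat.norm
        (fun n => hpartial u (Finset.range n)) |>.trans le_rfl |>.trans le_rfl
    refine ⟨LinearMap.mkContinuous F Cc hFbound, ?_, ?_⟩
    · intro u
      have : (LinearMap.mkContinuous F Cc hFbound) u = F u := rfl
      rw [this]
      exact (hsummable u).hasSum
    · exact LinearMap.mkContinuous_norm_le F hCc0 hFbound
  obtain ⟨TA, hTA, hTAn⟩ := master A hAcorner CA hCA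
  obtain ⟨TB, hTB, _⟩ := master B hBcorner CB hCB
  refine ⟨TA, TB, TA + TB, TA.comp TB, hTA, hTB, ?_, ?_, rfl, rfl, hTAn⟩
  · -- sum
    intro u
    have h := (hTA u).add (hTB u)
    have hfun : (fun n => ((R (v n)).comp (((A n + B n)).comp (R (v n)⁻¹))) u)
        = fun n => ((R (v n)).comp ((A n).comp (R (v n)⁻¹))) u
            + ((R (v n)).comp ((B n).comp (R (v n)⁻¹))) u := by
      funext n
      simp only [ContinuousLinearMap.comp_apply, ContinuousLinearMap.add_apply, map_add]
    rw [hfun, ContinuousLinearMap.add_apply]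
    exact h
  · -- product
    intro u
    have hfun : (fun n => ((R (v n)).comp (((A n).comp (B n)).comp (R (v n)⁻¹))) u)
        = fun n => ((R (v n)).comp ((A n).comp (R (v n)⁻¹))) (TB u) := by
      funext n
      have e1 : ((R (v n)).comp (((A n).comp (B n)).comp (R (v n)⁻¹))) u
          = ((R (v n)).comp ((A n).comp (R (v n)⁻¹)))
              (((R (v n)).comp ((B n).comp (R (v n)⁻¹))) u) := by
        simp only [ContinuousLinearMap.comp_apply, hRR]
      rw [e1]
      -- TB u and the n-th term of its series agree on S n
      have hpt : ∀ x ∈ S n, (TB u - ((R (v n)).comp ((B n).comp (R (v n)⁻¹))) u) x = 0 := by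
        intro x hx
        have h1 := heval x _ _ (hTB u)
        have h2 : HasSum (fun m => ((R (v m)).comp ((B m).comp (R (v m)⁻¹))) u x)
            (((R (v n)).comp ((B n).comp (R (v n)⁻¹))) u x) := by
          apply hasSum_single n
          intro m hmn
          exact hTsupp B hBcorner m u x
            (fun hxm => Set.disjoint_left.1 (hSdisj n m (Ne.symm hmn)) hx hxm)
        have h3 : TB u x = ((R (v n)).comp ((B n).comp (R (v n)⁻¹))) u x := h1.unique h2
        rw [lp.coeFn_sub, Pi.sub_apply, h3, sub_self]
      have hdiff := hkill A hAcorner n _ hpt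
      have h0 : ((R (v n)).comp ((A n).comp (R (v n)⁻¹))) (TB u)
          - ((R (v n)).comp ((A n).comp (R (v n)⁻¹)))
              (((R (v n)).comp ((B n).comp (R (v n)⁻¹))) u) = 0 := by
        rw [← map_sub]
        exact hdiff
      exact (sub_eq_zero.1 h0).symm
    rw [hfun]
    exact hTA (TB u)
end

section
/- Suppose that e ∈ Y v⁻¹h and Ω_{r-1} ∩ (∂_Ω Y) v⁻¹ h = ∅, where Y ⊆ Γ, v, h ∈ Γ, and r ≥ 1. Then Ω_{r-1} ⊆ Y v⁻¹ h. (Ω-boundaries have no gaps: any Ω-word path from an inside point to an outside point must cross the Ω-boundary.) -/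
/-- `Ω_n`: the set of all products of at most `n` elements of `Ω` (with `Ω₀ = {e}`). -/
def omegaWords {Γ : Type*} [Group Γ] (Ω : Finset Γ) (n : ℕ) : Set Γ :=
  {x | ∃ l : List Γ, (∀ w ∈ l, w ∈ Ω) ∧ l.length ≤ n ∧ l.prod = x}

/-- The `Ω`-interior of a set `A ⊆ Γ`. -/
def omegaInterior {Γ : Type*} [Group Γ] (Ω : Finset Γ) (A : Set Γ) : Set Γ :=
  {a ∈ A | ∀ ω ∈ Ω, ω * a ∈ A}

/-- The `Ω`-boundary of a set `A ⊆ Γ`. -/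
def omegaBoundary {Γ : Type*} [Group Γ] (Ω : Finset Γ) (A : Set Γ) : Set Γ :=
  A \ omegaInterior Ω A

/-- If `e ∈ Y v⁻¹ h` and `Ω_{r-1} ∩ (∂_Ω Y) v⁻¹ h = ∅`, then
`Ω_{r-1} ⊆ Y v⁻¹ h`: `Ω`-boundaries have no gaps. -/
theorem omegaWords_subset_of_inner_of_disjoint_boundary
    {Γ : Type*} [Group Γ] (Ω : Finset Γ) (he : (1 : Γ) ∈ Ω)
    (Y : Set Γ) (v h : Γ) (r : ℕ) (hr : 1 ≤ r)
    (h1 : (1 : Γ) ∈ (fun y => y * v⁻¹ * h) '' Y)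
    (h2 : omegaWords Ω (r - 1) ∩ ((fun y => y * v⁻¹ * h) '' omegaBoundary Ω Y) = ∅) :
    omegaWords Ω (r - 1) ⊆ (fun y => y * v⁻¹ * h) '' Y := by
  have key : ∀ l : List Γ, (∀ w ∈ l, w ∈ Ω) → l.length ≤ r - 1 →
      l.prod ∈ (fun y => y * v⁻¹ * h) '' Y := by
    intro l
    induction l with
    | nil => intro _ _; simpa using h1
    | cons ω l ih =>
      intro hmem hlen
      have hlen' : l.length ≤ r - 1 := le_trans (by simp) hlen
      have hmem' : ∀ w ∈ l, w ∈ Ω := fun w hw => hmem w (List.mem_cons_of_mem _ hw)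
      obtain ⟨a, haY, ha⟩ := ih hmem' hlen'
      have hword : l.prod ∈ omegaWords Ω (r - 1) := ⟨l, hmem', hlen', rfl⟩
      have hnb : a ∉ omegaBoundary Ω Y := by
        intro hb
        have : l.prod ∈ omegaWords Ω (r - 1) ∩
            ((fun y => y * v⁻¹ * h) '' omegaBoundary Ω Y) := ⟨hword, a, hb, ha⟩
        rw [h2] at this
        exact this
      have hint : a ∈ omegaInterior Ω Y := by
        by_contra hc
        exact hnb ⟨haY, hc⟩
      refine ⟨ω * a, hint.2 ω (hmem ω List.mem_cons_self), ?_⟩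
      simp only [List.prod_cons]
      simp only at ha
      rw [← ha]; group
  rintro x ⟨l, hmem, hlen, rfl⟩
  exact key l hmem hlen
end
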